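/- Let μ be a probability measure on X, P a probability measure with density p = dP/dμ satisfying c₁ ≤ p ≤ c₂ μ-a.e., where 0 < c₁ < 1 < c₂, c₂ > c₁e^ε. With b, r₁, r₂ defined as b = (c₂−c₁)/((e^ε−1)(1−c₁)+c₂−c₁), r₁ = c₁/b, r₂ = c₂/(be^ε), one has ∫ clip(p(x)/r₁; b, be^ε) dμ(x) ≥ 1 and ∫ clip(p(x)/r₂; b, be^ε) dμ(x) ≤ 1. -/

import Mathlib

open MeasureTheory

set_option maxHeartbeats 1000000 in
theorem clip_normalization_range {X : Type*} [MeasurableSpace X]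
    (μ : Measure X) [IsProbabilityMeasure μ]
    (ε c₁ c₂ : ℝ) (hε : 0 < ε) (hc₁ : 0 < c₁) (h1 : c₁ < 1) (h2 : 1 < c₂)
    (hc : c₁ * Real.exp ε < c₂)
    (p : X → ℝ) (hp : Measurable p) (hpint : Integrable p μ)
    (hpi : ∫ x, p x ∂μ = 1)
    (hbd : ∀ᵐ x ∂μ, c₁ ≤ p x ∧ p x ≤ c₂)
    (b r₁ r₂ : ℝ)
    (hb : b = (c₂ - c₁) / ((Real.exp ε - 1) * (1 - c₁) + c₂ - c₁))
    (hr₁ : r₁ = c₁ / b) (hr₂ : r₂ = c₂ / (b * Real.exp ε)) :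
    1 ≤ ∫ x, max b (min (b * Real.exp ε) (p x / r₁)) ∂μ ∧
    ∫ x, max b (min (b * Real.exp ε) (p x / r₂)) ∂μ ≤ 1 := by
  set E := Real.exp ε with hE
  have hE1 : 1 < E := by
    rw [hE, show (1:ℝ) = Real.exp 0 by simp]
    exact Real.exp_lt_exp.mpr hε
  have hc12 : c₁ < c₂ := lt_trans h1 h2
  have hD : 0 < (E - 1) * (1 - c₁) + c₂ - c₁ := by nlinarith
  have hb0 : 0 < b := by rw [hb]; exact div_pos (by linarith) hD
  have hbD : b * ((E - 1) * (1 - c₁) + c₂ - c₁) = c₂ - c₁ := by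
    rw [hb]; field_simp
  set B := b * (E - 1) / (c₂ - c₁) with hBdef
  have hB : B * (c₂ - c₁) = b * (E - 1) := by
    rw [hBdef, div_mul_cancel₀]
    linarith
  have hB0 : 0 ≤ B := by
    apply div_nonneg <;> nlinarith
  set A := b - B * c₁ with hAdef
  -- integral of the chord is 1
  have hLint : Integrable (fun x => A + B * p x) μ :=
    (integrable_const A).add (hpint.const_mul B)
  have hLval : ∫ x, A + B * p x ∂μ = 1 := by
    rw [integral_add (integrable_const A) (hpint.const_mul B), integral_const,
      integral_const_mul, hpi, probReal_univ]
    have : A + B = 1 := by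
      have h1' : (A + B) * (c₂ - c₁) = c₂ - c₁ := by
        have : (A + B) * (c₂ - c₁) = b * (c₂ - c₁) + B * (c₂ - c₁) * (1 - c₁) := by
          rw [hAdef]; ring
        rw [this, hB]; nlinarith [hbD]
      have : (A + B - 1) * (c₂ - c₁) = 0 := by linarith [h1']
      rcases mul_eq_zero.mp this with h | h
      · linarith
      · linarith
    simp [this]
  have hbE : b < b * E := by nlinarith
  -- integrability of the clipped functions
  have hclip : ∀ r : ℝ, Integrable (fun x => max b (min (b * E) (p x / r))) μ := by
    intro r
    exact (integrable_const b).sup ((integrable_const (b * E)).inf (hpint.div_const r))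
  constructor
  · -- lower bound
    have hpt : ∀ᵐ x ∂μ, A + B * p x ≤ max b (min (b * E) (p x / r₁)) := by
      filter_upwards [hbd] with x hx
      obtain ⟨hx1, hx2⟩ := hx
      have hrw : p x / r₁ = p x * b / c₁ := by
        rw [hr₁, div_div_eq_mul_div]
      refine le_trans (le_min ?_ ?_) (le_max_right _ _)
      · -- chord ≤ b * E
        nlinarith [mul_le_mul_of_nonneg_left hx2 hB0]
      · -- chord ≤ p x * b / c₁
        rw [hrw, le_div_iff₀ hc₁]
        have hbcB : 0 ≤ b - c₁ * B := by
          have h : (b - c₁ * B) * (c₂ - c₁) = b * (c₂ - c₁ * E) := by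
            linear_combination (-c₁) * hB
          nlinarith [mul_pos hb0 (show (0:ℝ) < c₂ - c₁ * E by linarith), h]
        nlinarith [mul_nonneg (sub_nonneg.2 hx1) hbcB]
    calc (1:ℝ) = ∫ x, A + B * p x ∂μ := hLval.symm
      _ ≤ _ := integral_mono_ae hLint (hclip r₁) hpt
  · -- upper bound
    have hpt : ∀ᵐ x ∂μ, max b (min (b * E) (p x / r₂)) ≤ A + B * p x := by
      filter_upwards [hbd] with x hx
      obtain ⟨hx1, hx2⟩ := hx
      have hrw : p x / r₂ = p x * (b * E) / c₂ := by
        rw [hr₂, div_div_eq_mul_div]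
      refine max_le ?_ (le_trans (min_le_right _ _) ?_)
      · linarith [mul_le_mul_of_nonneg_left hx1 hB0]
      · rw [hrw, div_le_iff₀ (show (0:ℝ) < c₂ by linarith)]
        have hKey : ((b - B * c₁ + B * p x) * c₂ - p x * (b * E)) * (c₂ - c₁)
            = b * (c₂ - p x) * (c₂ - c₁ * E) := by
          linear_combination (c₂ * (p x - c₁)) * hB
        rw [hAdef]
        nlinarith [hKey, mul_nonneg (mul_nonneg hb0.le (sub_nonneg.2 hx2))
          (show (0:ℝ) ≤ c₂ - c₁ * E by linarith), sub_pos.2 hc12]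
    calc ∫ x, max b (min (b * E) (p x / r₂)) ∂μ
        ≤ ∫ x, A + B * p x ∂μ := integral_mono_ae (hclip r₂) hLint hpt
      _ = 1 := hLval
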